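/- Let Q = (Q_{ij})_{i,j≥1} be a substochastic matrix on the positive integers satisfying the spectral hypothesis (with data ρ, u, v, ν, K, ε and S⁽ⁿ⁾ := Qⁿ − ρⁿ v uᵀ). For i ≥ 1, 0 ≤ ℓ ≤ n with (Qⁿ𝟙)_i > 0, and x = (x_1,…,x_ℓ) ∈ {1,2,…}^ℓ (x_0 := i), define the conditioned path law p_i^{(ℓ,n)}(x) := (Π_{u=1}^{ℓ} Q_{x_{u-1}x_u}) · (Q^{n−ℓ}𝟙)_{x_ℓ} / (Qⁿ𝟙)_i, the Q-process path law p_i^{(ℓ,↑)}(x) := ρ^{−ℓ} v_i^{−1} (Π_{u=1}^{ℓ} Q_{x_{u-1}x_u}) v_{x_ℓ}, and the total variation distance d_ℓ^{(n)}(i) := (1/2) Σ_{x ∈ {1,2,…}^ℓ} | p_i^{(ℓ,n)}(x) − p_i^{(ℓ,↑)}(x) |. Then for every i ≥ 1 and every fixed k ≥ 1, lim_{n→∞} d_{n−k}^{(n)}(i) = (ρ^{−k}/2) Σ_{j=1}^{∞} u_j | (S⁽ᵏ⁾𝟙)_j |. -/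

import Mathlib

set_option linter.unusedSectionVars false
set_option maxHeartbeats 1000000

open Filter Topology
open scoped ENNReal

/-- `n`-th power of an infinite matrix indexed by the positive integers. -/
noncomputable def matpow (Q : ℕ+ → ℕ+ → ℝ) : ℕ → ℕ+ → ℕ+ → ℝ
  | 0 => fun i j => if i = j then 1 else 0
  | n + 1 => fun i j => ∑' k : ℕ+, matpow Q n i k * Q k j

/-- `(Qⁿ𝟙)ᵢ`. -/
noncomputable def rowSum (Q : ℕ+ → ℕ+ → ℝ) (n : ℕ) (i : ℕ+) : ℝ :=
  ∑' j : ℕ+, matpow Q n i j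

/-- The product `Q_{x₀x₁}Q_{x₁x₂}⋯Q_{x_{ℓ-1}x_ℓ}` along a path `x : Fin ℓ → ℕ+`
started at `x₀ = i`. -/
noncomputable def pathProd (Q : ℕ+ → ℕ+ → ℝ) (i : ℕ+) {ℓ : ℕ} (x : Fin ℓ → ℕ+) : ℝ :=
  ∏ u : Fin ℓ,
    Q (if h : u.val = 0 then i else x ⟨u.val - 1, lt_of_le_of_lt (Nat.sub_le _ _) u.isLt⟩) (x u)

/-- The final state `x_ℓ` of a path (equal to `i` when `ℓ = 0`). -/
def lastState (i : ℕ+) {ℓ : ℕ} (x : Fin ℓ → ℕ+) : ℕ+ :=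
  if h : ℓ = 0 then i else x ⟨ℓ - 1, by omega⟩

/-- `p_i^{(ℓ,n)}(x)`: the law of the first `ℓ` steps of the chain started at `i`,
conditioned on survival up to time `n`. -/
noncomputable def condPathLaw (Q : ℕ+ → ℕ+ → ℝ) (i : ℕ+) (n : ℕ) {ℓ : ℕ}
    (x : Fin ℓ → ℕ+) : ℝ :=
  pathProd Q i x * rowSum Q (n - ℓ) (lastState i x) / rowSum Q n i

/-- `p_i^{(ℓ,↑)}(x)`: the law of the first `ℓ` steps of the `Q`-process started at `i`. -/
noncomputable def qPathLaw (Q : ℕ+ → ℕ+ → ℝ) (ρ : ℝ) (v : ℕ+ → ℝ) (i : ℕ+) {ℓ : ℕ}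
    (x : Fin ℓ → ℕ+) : ℝ :=
  (ρ ^ ℓ)⁻¹ * (v i)⁻¹ * (pathProd Q i x * v (lastState i x))

/-- `d_ℓ^{(n)}(i)`: total variation distance between the two path laws. -/
noncomputable def tvDist (Q : ℕ+ → ℕ+ → ℝ) (ρ : ℝ) (v : ℕ+ → ℝ) (i : ℕ+) (ℓ n : ℕ) : ℝ :=
  (1 / 2) * ∑' x : Fin ℓ → ℕ+, |condPathLaw Q i n x - qPathLaw Q ρ v i x|

/-- `(S⁽ⁿ⁾𝟙)ᵢ` where `S⁽ⁿ⁾ = Qⁿ - ρⁿ v uᵀ`. -/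
noncomputable def Sone (Q : ℕ+ → ℕ+ → ℝ) (ρ : ℝ) (v u : ℕ+ → ℝ) (n : ℕ) (i : ℕ+) : ℝ :=
  ∑' j : ℕ+, (matpow Q n i j - ρ ^ n * v i * u j)

/-- Conversion from an `ENNReal` tsum identity to a real one. -/
lemma enn_to_real {α : Type*} {f : α → ℝ} {c : ℝ} (h0 : ∀ a, 0 ≤ f a) (hc : 0 ≤ c)
    (h : ∑' a, ENNReal.ofReal (f a) = ENNReal.ofReal c) :
    Summable f ∧ ∑' a, f a = c := by
  have hfin : (∑' a, ENNReal.ofReal (f a)) ≠ ⊤ := by rw [h]; exact ENNReal.ofReal_ne_top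
  have hs : Summable f := by
    have h2 := ENNReal.summable_toReal hfin
    exact h2.congr fun a => ENNReal.toReal_ofReal (h0 a)
  refine ⟨hs, ?_⟩
  rw [← ENNReal.ofReal_tsum_of_nonneg h0 hs] at h
  exact (ENNReal.ofReal_eq_ofReal_iff (tsum_nonneg h0) hc).1 h


/-- Pratt's lemma / generalized dominated convergence for series. -/
lemma pratt {α : Type*} {F G : ℕ → α → ℝ} {F' G' : α → ℝ}
    (hF0 : ∀ᶠ n in atTop, ∀ a, 0 ≤ F n a)
    (hFG : ∀ᶠ n in atTop, ∀ a, F n a ≤ G n a)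
    (hGsum : ∀ᶠ n in atTop, Summable (G n))
    (hFlim : ∀ a, Tendsto (fun n => F n a) atTop (𝓝 (F' a)))
    (hGlim : ∀ a, Tendsto (fun n => G n a) atTop (𝓝 (G' a)))
    (hG'sum : Summable G')
    (hGt : Tendsto (fun n => ∑' a, G n a) atTop (𝓝 (∑' a, G' a))) :
    Tendsto (fun n => ∑' a, F n a) atTop (𝓝 (∑' a, F' a)) := by
  have hF'0 : ∀ a, 0 ≤ F' a := fun a =>
    ge_of_tendsto (hFlim a) (hF0.mono fun n h => h a)
  have hF'G' : ∀ a, F' a ≤ G' a := fun a =>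
    le_of_tendsto_of_tendsto (hFlim a) (hGlim a) (hFG.mono fun n h => h a)
  have hG'0 : ∀ a, 0 ≤ G' a := fun a => le_trans (hF'0 a) (hF'G' a)
  have hF'sum : Summable F' := Summable.of_nonneg_of_le hF'0 hF'G' hG'sum
  have hFsum : ∀ᶠ n in atTop, Summable (F n) := by
    filter_upwards [hF0, hFG, hGsum] with n h0 hle hs
    exact Summable.of_nonneg_of_le h0 hle hs
  rw [Metric.tendsto_atTop]
  intro ε hε
  have hε5 : 0 < ε / 5 := by linarith
  obtain ⟨s, hs⟩ : ∃ s : Finset α, dist (∑ a ∈ s, G' a) (∑' a, G' a) < ε / 5 :=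
    ((Metric.tendsto_nhds.1 hG'sum.hasSum) (ε / 5) hε5).exists
  have e1 : ∀ᶠ n in atTop, dist (∑ a ∈ s, F n a) (∑ a ∈ s, F' a) < ε / 5 :=
    Metric.tendsto_nhds.1 (tendsto_finset_sum s (fun a _ => hFlim a)) (ε / 5) hε5
  have e3 : ∀ᶠ n in atTop, dist (∑ a ∈ s, G n a) (∑ a ∈ s, G' a) < ε / 5 :=
    Metric.tendsto_nhds.1 (tendsto_finset_sum s (fun a _ => hGlim a)) (ε / 5) hε5
  have e2 : ∀ᶠ n in atTop, dist (∑' a, G n a) (∑' a, G' a) < ε / 5 :=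
    Metric.tendsto_nhds.1 hGt (ε / 5) hε5
  have key : ∀ᶠ n in atTop, dist (∑' a, F n a) (∑' a, F' a) < ε := by
    filter_upwards [hF0, hFG, hGsum, hFsum, e1, e2, e3] with n h0 hle hGs hFs he1 he2 he3
    -- tail sums
    have hFt : ∑ a ∈ s, F n a + ∑' a : ↑(↑s : Set α)ᶜ, F n a = ∑' a, F n a :=
      Summable.sum_add_tsum_compl hFs
    have hF't : ∑ a ∈ s, F' a + ∑' a : ↑(↑s : Set α)ᶜ, F' a = ∑' a, F' a :=
      Summable.sum_add_tsum_compl hF'sum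
    have hGnt : ∑ a ∈ s, G n a + ∑' a : ↑(↑s : Set α)ᶜ, G n a = ∑' a, G n a :=
      Summable.sum_add_tsum_compl hGs
    have hG't : ∑ a ∈ s, G' a + ∑' a : ↑(↑s : Set α)ᶜ, G' a = ∑' a, G' a :=
      Summable.sum_add_tsum_compl hG'sum
    have htF : ∑' a : ↑(↑s : Set α)ᶜ, F n a ≤ ∑' a : ↑(↑s : Set α)ᶜ, G n a :=
      Summable.tsum_le_tsum (fun a => hle a) (hFs.subtype _) (hGs.subtype _)
    have htF' : ∑' a : ↑(↑s : Set α)ᶜ, F' a ≤ ∑' a : ↑(↑s : Set α)ᶜ, G' a :=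
      Summable.tsum_le_tsum (fun a => hF'G' a) (hF'sum.subtype _) (hG'sum.subtype _)
    have htF0 : 0 ≤ ∑' a : ↑(↑s : Set α)ᶜ, F n a := tsum_nonneg fun a => h0 a
    have htF'0 : 0 ≤ ∑' a : ↑(↑s : Set α)ᶜ, F' a := tsum_nonneg fun a => hF'0 a
    rw [Real.dist_eq] at he1 he2 he3 hs ⊢
    have habs1 : |∑' a, F n a - ∑' a, F' a|
        ≤ |∑ a ∈ s, F n a - ∑ a ∈ s, F' a|
          + (∑' a : ↑(↑s : Set α)ᶜ, F n a + ∑' a : ↑(↑s : Set α)ᶜ, F' a) := by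
      have : ∑' a, F n a - ∑' a, F' a
          = (∑ a ∈ s, F n a - ∑ a ∈ s, F' a)
            + (∑' a : ↑(↑s : Set α)ᶜ, F n a - ∑' a : ↑(↑s : Set α)ᶜ, F' a) := by
        rw [← hFt, ← hF't]; ring
      rw [this]
      refine (abs_add_le _ _).trans ?_
      have : |∑' a : ↑(↑s : Set α)ᶜ, F n a - ∑' a : ↑(↑s : Set α)ᶜ, F' a|
          ≤ ∑' a : ↑(↑s : Set α)ᶜ, F n a + ∑' a : ↑(↑s : Set α)ᶜ, F' a :=
        abs_le.2 ⟨by linarith, by linarith⟩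
      linarith
    have habs2 : ∑' a : ↑(↑s : Set α)ᶜ, G n a < 3 * (ε / 5) := by
      have h1 : |∑ a ∈ s, G' a - ∑' a, G' a| < ε / 5 := hs
      rw [abs_lt] at he2 he3 h1
      linarith
    have hg' : ∑' a : ↑(↑s : Set α)ᶜ, G' a < ε / 5 := by
      rw [abs_lt] at hs; linarith
    have h2 : ∑' a : ↑(↑s : Set α)ᶜ, F n a < 3 * (ε / 5) := lt_of_le_of_lt htF habs2
    have h3 : ∑' a : ↑(↑s : Set α)ᶜ, F' a < ε / 5 := lt_of_le_of_lt htF' hg'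
    calc |∑' a, F n a - ∑' a, F' a|
        ≤ |∑ a ∈ s, F n a - ∑ a ∈ s, F' a|
          + (∑' a : ↑(↑s : Set α)ᶜ, F n a + ∑' a : ↑(↑s : Set α)ᶜ, F' a) := habs1
      _ < ε := by linarith
  rw [Metric.tendsto_atTop] at *
  exact eventually_atTop.1 key

section Aux

variable {Q : ℕ+ → ℕ+ → ℝ}

lemma matpow_zero (i j : ℕ+) : matpow Q 0 i j = if i = j then 1 else 0 := rfl

lemma pathProd_nonneg (hQ0 : ∀ i j, 0 ≤ Q i j) (i : ℕ+) {ℓ : ℕ} (x : Fin ℓ → ℕ+) :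
    0 ≤ pathProd Q i x :=
  Finset.prod_nonneg fun _ _ => hQ0 _ _

lemma snoc_lt {ℓ : ℕ} (y : Fin ℓ → ℕ+) (j : ℕ+) (a : ℕ) (h : a < ℓ) (h' : a < ℓ + 1) :
    (Fin.snoc y j : Fin (ℓ + 1) → ℕ+) ⟨a, h'⟩ = y ⟨a, h⟩ := by
  have he : (⟨a, h'⟩ : Fin (ℓ + 1)) = Fin.castSucc ⟨a, h⟩ := rfl
  rw [he, Fin.snoc_castSucc]

lemma lastState_snoc (i : ℕ+) {ℓ : ℕ} (y : Fin ℓ → ℕ+) (j : ℕ+) :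
    lastState i (Fin.snoc y j) = j := by
  unfold lastState
  rw [dif_neg (Nat.succ_ne_zero ℓ)]
  exact Fin.snoc_last _ _

lemma pathProd_snoc (i : ℕ+) {ℓ : ℕ} (y : Fin ℓ → ℕ+) (j : ℕ+) :
    pathProd Q i (Fin.snoc y j) = pathProd Q i y * Q (lastState i y) j := by
  unfold pathProd
  rw [Fin.prod_univ_castSucc]
  congr 1
  · refine Finset.prod_congr rfl fun w _ => ?_
    congr 1
    · by_cases hw : w.val = 0
      · rw [dif_pos hw, dif_pos (show ((Fin.castSucc w).val = 0) from hw)]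
      · rw [dif_neg (show ¬((Fin.castSucc w).val = 0) from hw), dif_neg hw]
        exact snoc_lt y j (w.val - 1) (by omega) _
    · exact Fin.snoc_castSucc _ _ _
  · rw [Fin.snoc_last]
    congr 1
    unfold lastState
    by_cases hℓ : ℓ = 0
    · subst hℓ
      rw [dif_pos (show (Fin.last 0).val = 0 from rfl), dif_pos rfl]
    · rw [dif_neg (show ¬((Fin.last ℓ).val = 0) from hℓ), dif_neg hℓ]
      exact snoc_lt y j (ℓ - 1) (by omega) _


lemma matpow_succ (n : ℕ) (i j : ℕ+) :
    matpow Q (n + 1) i j = ∑' k : ℕ+, matpow Q n i k * Q k j := rfl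

lemma matpow_nonneg (hQ0 : ∀ i j, 0 ≤ Q i j) : ∀ n (i j : ℕ+), 0 ≤ matpow Q n i j
  | 0, i, j => by rw [matpow_zero]; positivity
  | n + 1, i, j => by
      rw [matpow_succ]
      exact tsum_nonneg fun k => mul_nonneg (matpow_nonneg hQ0 n i k) (hQ0 k j)

variable (hQ0 : ∀ i j, 0 ≤ Q i j) (hQs : ∀ i, Summable (fun j => Q i j))
  (hQr : ∀ i, ∑' j, Q i j ≤ 1)

include hQ0 hQs hQr

lemma Q_entry_le_one (k j : ℕ+) : Q k j ≤ 1 :=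
  le_trans (Summable.le_tsum (hQs k) j fun b _ => hQ0 k b) (hQr k)

lemma Q_sum_le_one (s : Finset ℕ+) (k : ℕ+) : ∑ j ∈ s, Q k j ≤ 1 :=
  le_trans (Summable.sum_le_tsum s (fun b _ => hQ0 k b) (hQs k)) (hQr k)

lemma matpow_row : ∀ n (i : ℕ+),
    Summable (fun j => matpow Q n i j) ∧ ∑' j, matpow Q n i j ≤ 1 := by
  intro n
  induction n with
  | zero =>
    intro i
    constructor
    · apply summable_of_ne_finset_zero (s := {i})
      intro j hj
      rw [matpow_zero, if_neg]
      intro h; exact hj (by simp [h.symm])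
    · rw [tsum_eq_single i]
      · rw [matpow_zero, if_pos rfl]
      · intro b hb
        rw [matpow_zero, if_neg fun h => hb h.symm]
  | succ n IH =>
    intro i
    have hin : ∀ j, Summable fun k => matpow Q n i k * Q k j := fun j =>
      Summable.of_nonneg_of_le
        (fun k => mul_nonneg (matpow_nonneg hQ0 n i k) (hQ0 k j))
        (fun k => mul_le_of_le_one_right (matpow_nonneg hQ0 n i k)
          (Q_entry_le_one hQ0 hQs hQr k j)) (IH i).1
    have hbound : ∀ s : Finset ℕ+, ∑ j ∈ s, matpow Q (n + 1) i j ≤ 1 := by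
      intro s
      have h1 : ∑ j ∈ s, matpow Q (n + 1) i j
          = ∑' k : ℕ+, ∑ j ∈ s, matpow Q n i k * Q k j := by
        simp_rw [matpow_succ]
        exact (Summable.tsum_finsetSum (fun j _ => hin j)).symm
      rw [h1]
      have h2 : ∀ k : ℕ+, ∑ j ∈ s, matpow Q n i k * Q k j
          = matpow Q n i k * ∑ j ∈ s, Q k j := by
        intro k; rw [Finset.mul_sum]
      calc ∑' k : ℕ+, ∑ j ∈ s, matpow Q n i k * Q k j
          ≤ ∑' k : ℕ+, matpow Q n i k := by
            apply Summable.tsum_le_tsum _ _ (IH i).1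
            · intro k
              rw [h2]
              exact mul_le_of_le_one_right (matpow_nonneg hQ0 n i k)
                (Q_sum_le_one hQ0 hQs hQr s k)
            · apply Summable.of_nonneg_of_le _ _ (IH i).1
              · intro k
                exact Finset.sum_nonneg fun j _ =>
                  mul_nonneg (matpow_nonneg hQ0 n i k) (hQ0 k j)
              · intro k
                rw [h2]
                exact mul_le_of_le_one_right (matpow_nonneg hQ0 n i k)
                  (Q_sum_le_one hQ0 hQs hQr s k)
        _ ≤ 1 := (IH i).2
    refine ⟨summable_of_sum_le (fun j => tsum_nonneg fun k =>
      mul_nonneg (matpow_nonneg hQ0 n i k) (hQ0 k j)) hbound, ?_⟩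
    exact Summable.tsum_le_of_sum_le (summable_of_sum_le (fun j => tsum_nonneg fun k =>
      mul_nonneg (matpow_nonneg hQ0 n i k) (hQ0 k j)) hbound) hbound

lemma rowSum_nonneg (n : ℕ) (i : ℕ+) : 0 ≤ rowSum Q n i :=
  tsum_nonneg fun j => matpow_nonneg hQ0 n i j

lemma rowSum_le_one (n : ℕ) (i : ℕ+) : rowSum Q n i ≤ 1 := (matpow_row hQ0 hQs hQr n i).2

lemma ofReal_matpow_succ (n : ℕ) (i j : ℕ+) :
    ENNReal.ofReal (matpow Q (n + 1) i j)
      = ∑' k : ℕ+, ENNReal.ofReal (matpow Q n i k) * ENNReal.ofReal (Q k j) := by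
  rw [matpow_succ, ENNReal.ofReal_tsum_of_nonneg
    (fun k => mul_nonneg (matpow_nonneg hQ0 n i k) (hQ0 k j))
    (Summable.of_nonneg_of_le
      (fun k => mul_nonneg (matpow_nonneg hQ0 n i k) (hQ0 k j))
      (fun k => mul_le_of_le_one_right (matpow_nonneg hQ0 n i k)
        (Q_entry_le_one hQ0 hQs hQr k j)) (matpow_row hQ0 hQs hQr n i).1)]
  exact tsum_congr fun k => ENNReal.ofReal_mul (matpow_nonneg hQ0 n i k)

lemma ofReal_matpow_succ_left (n : ℕ) (i j : ℕ+) :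
    ENNReal.ofReal (matpow Q (n + 1) i j)
      = ∑' t : ℕ+, ENNReal.ofReal (Q i t) * ENNReal.ofReal (matpow Q n t j) := by
  induction n generalizing i j with
  | zero =>
    rw [ofReal_matpow_succ hQ0 hQs hQr]
    rw [tsum_eq_single i, tsum_eq_single j]
    · rw [matpow_zero, if_pos rfl, matpow_zero, if_pos rfl, ENNReal.ofReal_one,
        one_mul, mul_one]
    · intro b hb; rw [matpow_zero, if_neg (fun h => hb h), ENNReal.ofReal_zero, mul_zero]
    · intro b hb; rw [matpow_zero, if_neg (fun h => hb h.symm), ENNReal.ofReal_zero, zero_mul]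
  | succ n IH =>
    rw [ofReal_matpow_succ hQ0 hQs hQr]
    calc ∑' k : ℕ+, ENNReal.ofReal (matpow Q (n + 1) i k) * ENNReal.ofReal (Q k j)
        = ∑' k : ℕ+, (∑' t : ℕ+, ENNReal.ofReal (Q i t) * ENNReal.ofReal (matpow Q n t k))
            * ENNReal.ofReal (Q k j) := by
          exact tsum_congr fun k => by rw [IH]
      _ = ∑' k : ℕ+, ∑' t : ℕ+, ENNReal.ofReal (Q i t)
            * (ENNReal.ofReal (matpow Q n t k) * ENNReal.ofReal (Q k j)) := by
          refine tsum_congr fun k => ?_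
          rw [← ENNReal.tsum_mul_right]
          exact tsum_congr fun t => by ring
      _ = ∑' t : ℕ+, ENNReal.ofReal (Q i t)
            * ∑' k : ℕ+, ENNReal.ofReal (matpow Q n t k) * ENNReal.ofReal (Q k j) := by
          rw [ENNReal.tsum_comm]
          exact tsum_congr fun t => by rw [ENNReal.tsum_mul_left]
      _ = ∑' t : ℕ+, ENNReal.ofReal (Q i t) * ENNReal.ofReal (matpow Q (n + 1) t j) := by
          exact tsum_congr fun t => by rw [← ofReal_matpow_succ hQ0 hQs hQr]

lemma ofReal_rowSum (n : ℕ) (i : ℕ+) :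
    ENNReal.ofReal (rowSum Q n i) = ∑' j : ℕ+, ENNReal.ofReal (matpow Q n i j) :=
  ENNReal.ofReal_tsum_of_nonneg (fun j => matpow_nonneg hQ0 n i j)
    (matpow_row hQ0 hQs hQr n i).1

lemma ofReal_rowSum_succ_left (n : ℕ) (i : ℕ+) :
    ENNReal.ofReal (rowSum Q (n + 1) i)
      = ∑' t : ℕ+, ENNReal.ofReal (Q i t) * ENNReal.ofReal (rowSum Q n t) := by
  rw [ofReal_rowSum hQ0 hQs hQr]
  calc ∑' j : ℕ+, ENNReal.ofReal (matpow Q (n + 1) i j)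
      = ∑' j : ℕ+, ∑' t : ℕ+, ENNReal.ofReal (Q i t) * ENNReal.ofReal (matpow Q n t j) :=
        tsum_congr fun j => ofReal_matpow_succ_left hQ0 hQs hQr n i j
    _ = ∑' t : ℕ+, ENNReal.ofReal (Q i t) * ∑' j : ℕ+, ENNReal.ofReal (matpow Q n t j) := by
        rw [ENNReal.tsum_comm]
        exact tsum_congr fun t => by rw [ENNReal.tsum_mul_left]
    _ = ∑' t : ℕ+, ENNReal.ofReal (Q i t) * ENNReal.ofReal (rowSum Q n t) :=
        tsum_congr fun t => by rw [← ofReal_rowSum hQ0 hQs hQr]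


lemma chapman_enn (a : ℕ) : ∀ (b : ℕ) (i : ℕ+),
    ∑' j : ℕ+, ENNReal.ofReal (matpow Q a i j) * ENNReal.ofReal (rowSum Q b j)
      = ENNReal.ofReal (rowSum Q (a + b) i) := by
  induction a with
  | zero =>
    intro b i
    rw [tsum_eq_single i, Nat.zero_add]
    · rw [matpow_zero, if_pos rfl, ENNReal.ofReal_one, one_mul]
    · intro j hj
      rw [matpow_zero, if_neg fun h => hj h.symm, ENNReal.ofReal_zero, zero_mul]
  | succ a IH =>
    intro b i
    calc ∑' j : ℕ+, ENNReal.ofReal (matpow Q (a + 1) i j) * ENNReal.ofReal (rowSum Q b j)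
        = ∑' j : ℕ+, ∑' t : ℕ+, ENNReal.ofReal (Q i t)
            * (ENNReal.ofReal (matpow Q a t j) * ENNReal.ofReal (rowSum Q b j)) := by
          refine tsum_congr fun j => ?_
          rw [ofReal_matpow_succ_left hQ0 hQs hQr, ← ENNReal.tsum_mul_right]
          exact tsum_congr fun t => by ring
      _ = ∑' t : ℕ+, ENNReal.ofReal (Q i t)
            * ∑' j : ℕ+, ENNReal.ofReal (matpow Q a t j) * ENNReal.ofReal (rowSum Q b j) := by
          rw [ENNReal.tsum_comm]
          exact tsum_congr fun t => by rw [ENNReal.tsum_mul_left]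
      _ = ∑' t : ℕ+, ENNReal.ofReal (Q i t) * ENNReal.ofReal (rowSum Q (a + b) t) :=
          tsum_congr fun t => by rw [IH b t]
      _ = ENNReal.ofReal (rowSum Q (a + 1 + b) i) := by
          rw [show a + 1 + b = (a + b) + 1 by omega,
            ofReal_rowSum_succ_left hQ0 hQs hQr]

lemma chapman (a b : ℕ) (i : ℕ+) :
    Summable (fun j => matpow Q a i j * rowSum Q b j)
      ∧ ∑' j : ℕ+, matpow Q a i j * rowSum Q b j = rowSum Q (a + b) i := by
  apply enn_to_real
    (fun j => mul_nonneg (matpow_nonneg hQ0 a i j) (rowSum_nonneg hQ0 hQs hQr b j))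
    (rowSum_nonneg hQ0 hQs hQr (a + b) i)
  rw [← chapman_enn hQ0 hQs hQr a b i]
  exact tsum_congr fun j => ENNReal.ofReal_mul (matpow_nonneg hQ0 a i j)


lemma path_tsum : ∀ (ℓ : ℕ) (i : ℕ+) (g : ℕ+ → ℝ≥0∞),
    ∑' x : Fin ℓ → ℕ+, ENNReal.ofReal (pathProd Q i x) * g (lastState i x)
      = ∑' j : ℕ+, ENNReal.ofReal (matpow Q ℓ i j) * g j := by
  intro ℓ
  induction ℓ with
  | zero =>
    intro i g
    rw [tsum_eq_single (fun z : Fin 0 => z.elim0 : Fin 0 → ℕ+)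
      (fun b hb => absurd (Subsingleton.elim b _) hb)]
    rw [tsum_eq_single i]
    · have h1 : pathProd Q i (fun z : Fin 0 => z.elim0) = 1 := by
        unfold pathProd; simp
      have h2 : lastState i (fun z : Fin 0 => z.elim0) = i := by
        unfold lastState; rw [dif_pos rfl]
      rw [h1, h2, matpow_zero, if_pos rfl, ENNReal.ofReal_one, one_mul]
    · intro b hb
      rw [matpow_zero, if_neg fun h => hb h.symm, ENNReal.ofReal_zero, zero_mul]
  | succ ℓ IH =>
    intro i g
    rw [← Equiv.tsum_eq
      (⟨fun p : (Fin ℓ → ℕ+) × ℕ+ => (Fin.snoc p.1 p.2 : Fin (ℓ + 1) → ℕ+),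
        fun x => (Fin.init x, x (Fin.last ℓ)), fun p => by simp, fun x => by simp⟩ :
        ((Fin ℓ → ℕ+) × ℕ+) ≃ (Fin (ℓ + 1) → ℕ+))
      (fun x => ENNReal.ofReal (pathProd Q i x) * g (lastState i x))]
    simp only [Equiv.coe_fn_mk]
    calc ∑' p : (Fin ℓ → ℕ+) × ℕ+,
          ENNReal.ofReal (pathProd Q i (Fin.snoc p.1 p.2))
            * g (lastState i (Fin.snoc p.1 p.2))
        = ∑' y : Fin ℓ → ℕ+, ∑' j : ℕ+,
            ENNReal.ofReal (pathProd Q i y) * (ENNReal.ofReal (Q (lastState i y) j) * g j) := by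
          rw [ENNReal.tsum_prod' (f := fun p => ENNReal.ofReal (pathProd Q i (Fin.snoc p.1 p.2))
            * g (lastState i (Fin.snoc p.1 p.2)))]
          refine tsum_congr fun y => tsum_congr fun j => ?_
          rw [pathProd_snoc, lastState_snoc,
            ENNReal.ofReal_mul (pathProd_nonneg hQ0 i y), mul_assoc]
      _ = ∑' y : Fin ℓ → ℕ+, ENNReal.ofReal (pathProd Q i y)
            * ∑' j : ℕ+, ENNReal.ofReal (Q (lastState i y) j) * g j :=
          tsum_congr fun y => ENNReal.tsum_mul_left
      _ = ∑' m : ℕ+, ENNReal.ofReal (matpow Q ℓ i m)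
            * ∑' j : ℕ+, ENNReal.ofReal (Q m j) * g j :=
          IH i (fun m => ∑' j : ℕ+, ENNReal.ofReal (Q m j) * g j)
      _ = ∑' m : ℕ+, ∑' j : ℕ+, (ENNReal.ofReal (matpow Q ℓ i m) * ENNReal.ofReal (Q m j)) * g j := by
          refine tsum_congr fun m => ?_
          rw [← ENNReal.tsum_mul_left]
          exact tsum_congr fun j => by ring
      _ = ∑' j : ℕ+, (∑' m : ℕ+, ENNReal.ofReal (matpow Q ℓ i m) * ENNReal.ofReal (Q m j)) * g j := by
          rw [ENNReal.tsum_comm]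
          exact tsum_congr fun j => by rw [ENNReal.tsum_mul_right]
      _ = ∑' j : ℕ+, ENNReal.ofReal (matpow Q (ℓ + 1) i j) * g j :=
          tsum_congr fun j => by rw [← ofReal_matpow_succ hQ0 hQs hQr]



lemma tsum_path_real (i : ℕ+) (l : ℕ) (g : ℕ+ → ℝ) (hg0 : ∀ j, 0 ≤ g j)
    (hsum : Summable (fun j => matpow Q l i j * g j)) :
    Summable (fun x : Fin l → ℕ+ => pathProd Q i x * g (lastState i x)) ∧
    ∑' x : Fin l → ℕ+, pathProd Q i x * g (lastState i x)
      = ∑' j : ℕ+, matpow Q l i j * g j := by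
  apply enn_to_real
    (fun x => mul_nonneg (pathProd_nonneg hQ0 i x) (hg0 _))
    (tsum_nonneg fun j => mul_nonneg (matpow_nonneg hQ0 l i j) (hg0 j))
  calc ∑' x : Fin l → ℕ+, ENNReal.ofReal (pathProd Q i x * g (lastState i x))
      = ∑' x : Fin l → ℕ+, ENNReal.ofReal (pathProd Q i x)
          * ENNReal.ofReal (g (lastState i x)) :=
        tsum_congr fun x => ENNReal.ofReal_mul (pathProd_nonneg hQ0 i x)
    _ = ∑' j : ℕ+, ENNReal.ofReal (matpow Q l i j) * ENNReal.ofReal (g j) :=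
        path_tsum hQ0 hQs hQr l i (fun j => ENNReal.ofReal (g j))
    _ = ∑' j : ℕ+, ENNReal.ofReal (matpow Q l i j * g j) :=
        tsum_congr fun j => (ENNReal.ofReal_mul (matpow_nonneg hQ0 l i j)).symm
    _ = ENNReal.ofReal (∑' j : ℕ+, matpow Q l i j * g j) :=
        (ENNReal.ofReal_tsum_of_nonneg
          (fun j => mul_nonneg (matpow_nonneg hQ0 l i j) (hg0 j)) hsum).symm

lemma tv_eq (ρ : ℝ) (v : ℕ+ → ℝ) (i : ℕ+) (n kk : ℕ) (hk : kk ≤ n)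
    (hsum : Summable (fun j => matpow Q (n - kk) i j *
        |rowSum Q kk j / rowSum Q n i - (ρ ^ (n - kk))⁻¹ * (v i)⁻¹ * v j|)) :
    tvDist Q ρ v i (n - kk) n
      = (1 / 2) * ∑' j : ℕ+, matpow Q (n - kk) i j *
          |rowSum Q kk j / rowSum Q n i - (ρ ^ (n - kk))⁻¹ * (v i)⁻¹ * v j| := by
  unfold tvDist
  congr 1
  rw [← (tsum_path_real hQ0 hQs hQr i (n - kk)
    (fun j => |rowSum Q kk j / rowSum Q n i - (ρ ^ (n - kk))⁻¹ * (v i)⁻¹ * v j|)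
    (fun j => abs_nonneg _) hsum).2]
  refine tsum_congr fun x => ?_
  unfold condPathLaw qPathLaw
  rw [Nat.sub_sub_self hk]
  have h : pathProd Q i x * rowSum Q kk (lastState i x) / rowSum Q n i
      - (ρ ^ (n - kk))⁻¹ * (v i)⁻¹ * (pathProd Q i x * v (lastState i x))
      = pathProd Q i x * (rowSum Q kk (lastState i x) / rowSum Q n i
          - (ρ ^ (n - kk))⁻¹ * (v i)⁻¹ * v (lastState i x)) := by
    ring
  rw [h, abs_mul, abs_of_nonneg (pathProd_nonneg hQ0 i x)]

lemma sone_eq (ρ : ℝ) (u v : ℕ+ → ℝ) (hu_sum : HasSum u 1) (n : ℕ) (i : ℕ+) :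
    Sone Q ρ v u n i = rowSum Q n i - ρ ^ n * v i := by
  unfold Sone rowSum
  rw [Summable.tsum_sub (matpow_row hQ0 hQs hQr n i).1 (hu_sum.summable.mul_left (ρ ^ n * v i))]
  rw [tsum_mul_left, hu_sum.tsum_eq, mul_one]


end Aux

section Eig
set_option linter.unusedSectionVars false

variable {Q : ℕ+ → ℕ+ → ℝ} {ρ : ℝ} {u v : ℕ+ → ℝ}
variable (hQ0 : ∀ i j, 0 ≤ Q i j) (hQs : ∀ i, Summable (fun j => Q i j))
  (hQr : ∀ i, ∑' j, Q i j ≤ 1) (hρ0 : 0 ≤ ρ)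
include hQ0 hQs hQr hρ0

lemma mv_enn (hv0 : ∀ j, 0 ≤ v j) (hv_eig : ∀ i, HasSum (fun j : ℕ+ => Q i j * v j) (ρ * v i)) :
    ∀ (l : ℕ) (i : ℕ+),
    ∑' j : ℕ+, ENNReal.ofReal (matpow Q l i j) * ENNReal.ofReal (v j)
      = ENNReal.ofReal (ρ ^ l * v i) := by
  intro l
  induction l with
  | zero =>
    intro i
    rw [tsum_eq_single i, pow_zero, one_mul]
    · rw [matpow_zero, if_pos rfl, ENNReal.ofReal_one, one_mul]
    · intro j hj
      rw [matpow_zero, if_neg fun h => hj h.symm, ENNReal.ofReal_zero, zero_mul]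
  | succ l IH =>
    intro i
    calc ∑' j : ℕ+, ENNReal.ofReal (matpow Q (l + 1) i j) * ENNReal.ofReal (v j)
        = ∑' j : ℕ+, ∑' t : ℕ+, ENNReal.ofReal (Q i t)
            * (ENNReal.ofReal (matpow Q l t j) * ENNReal.ofReal (v j)) := by
          refine tsum_congr fun j => ?_
          rw [ofReal_matpow_succ_left hQ0 hQs hQr, ← ENNReal.tsum_mul_right]
          exact tsum_congr fun t => by ring
      _ = ∑' t : ℕ+, ENNReal.ofReal (Q i t)
            * ∑' j : ℕ+, ENNReal.ofReal (matpow Q l t j) * ENNReal.ofReal (v j) := by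
          rw [ENNReal.tsum_comm]
          exact tsum_congr fun t => by rw [ENNReal.tsum_mul_left]
      _ = ∑' t : ℕ+, ENNReal.ofReal (Q i t) * ENNReal.ofReal (ρ ^ l * v t) :=
          tsum_congr fun t => by rw [IH t]
      _ = ENNReal.ofReal (ρ ^ l) * ∑' t : ℕ+, ENNReal.ofReal (Q i t * v t) := by
          rw [← ENNReal.tsum_mul_left]
          refine tsum_congr fun t => ?_
          rw [ENNReal.ofReal_mul (pow_nonneg hρ0 l), ENNReal.ofReal_mul (hQ0 i t)]
          ring
      _ = ENNReal.ofReal (ρ ^ (l + 1) * v i) := by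
          rw [← ENNReal.ofReal_tsum_of_nonneg (fun t => mul_nonneg (hQ0 i t) (hv0 t))
            (hv_eig i).summable, (hv_eig i).tsum_eq,
            ← ENNReal.ofReal_mul (pow_nonneg hρ0 l)]
          congr 1
          ring

lemma mv_real (hv0 : ∀ j, 0 ≤ v j) (hv_eig : ∀ i, HasSum (fun j : ℕ+ => Q i j * v j) (ρ * v i))
    (l : ℕ) (i : ℕ+) :
    Summable (fun j => matpow Q l i j * v j)
      ∧ ∑' j : ℕ+, matpow Q l i j * v j = ρ ^ l * v i := by
  apply enn_to_real (fun j => mul_nonneg (matpow_nonneg hQ0 l i j) (hv0 j))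
    (mul_nonneg (pow_nonneg hρ0 l) (hv0 i))
  rw [← mv_enn hQ0 hQs hQr hρ0 hv0 hv_eig l i]
  exact tsum_congr fun j => ENNReal.ofReal_mul (matpow_nonneg hQ0 l i j)

lemma uM_enn (hu0 : ∀ j, 0 ≤ u j) (hu_eig : ∀ j, HasSum (fun i : ℕ+ => u i * Q i j) (ρ * u j)) :
    ∀ (kk : ℕ) (m : ℕ+),
    ∑' j : ℕ+, ENNReal.ofReal (u j) * ENNReal.ofReal (matpow Q kk j m)
      = ENNReal.ofReal (ρ ^ kk * u m) := by
  intro kk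
  induction kk with
  | zero =>
    intro m
    rw [tsum_eq_single m, pow_zero, one_mul]
    · rw [matpow_zero, if_pos rfl, ENNReal.ofReal_one, mul_one]
    · intro j hj
      rw [matpow_zero, if_neg hj, ENNReal.ofReal_zero, mul_zero]
  | succ kk IH =>
    intro m
    calc ∑' j : ℕ+, ENNReal.ofReal (u j) * ENNReal.ofReal (matpow Q (kk + 1) j m)
        = ∑' j : ℕ+, ∑' t : ℕ+, (ENNReal.ofReal (u j) * ENNReal.ofReal (matpow Q kk j t))
            * ENNReal.ofReal (Q t m) := by
          refine tsum_congr fun j => ?_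
          rw [ofReal_matpow_succ hQ0 hQs hQr, ← ENNReal.tsum_mul_left]
          exact tsum_congr fun t => by ring
      _ = ∑' t : ℕ+, (∑' j : ℕ+, ENNReal.ofReal (u j) * ENNReal.ofReal (matpow Q kk j t))
            * ENNReal.ofReal (Q t m) := by
          rw [ENNReal.tsum_comm]
          exact tsum_congr fun t => by rw [ENNReal.tsum_mul_right]
      _ = ∑' t : ℕ+, ENNReal.ofReal (ρ ^ kk) * (ENNReal.ofReal (u t) * ENNReal.ofReal (Q t m)) := by
          refine tsum_congr fun t => ?_
          rw [IH t, ENNReal.ofReal_mul (pow_nonneg hρ0 kk)]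
          ring
      _ = ENNReal.ofReal (ρ ^ (kk + 1) * u m) := by
          rw [ENNReal.tsum_mul_left]
          have : ∑' t : ℕ+, ENNReal.ofReal (u t) * ENNReal.ofReal (Q t m)
              = ENNReal.ofReal (ρ * u m) := by
            rw [← (hu_eig m).tsum_eq, ENNReal.ofReal_tsum_of_nonneg
              (fun t => mul_nonneg (hu0 t) (hQ0 t m)) (hu_eig m).summable]
            exact (tsum_congr fun t => (ENNReal.ofReal_mul (hu0 t))).symm
          rw [this, ← ENNReal.ofReal_mul (pow_nonneg hρ0 kk)]
          congr 1
          ring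

lemma uRow_real (hu0 : ∀ j, 0 ≤ u j) (hu_eig : ∀ j, HasSum (fun i : ℕ+ => u i * Q i j) (ρ * u j))
    (hu_sum : HasSum u 1) (kk : ℕ) :
    Summable (fun j => u j * rowSum Q kk j)
      ∧ ∑' j : ℕ+, u j * rowSum Q kk j = ρ ^ kk := by
  apply enn_to_real (fun j => mul_nonneg (hu0 j) (rowSum_nonneg hQ0 hQs hQr kk j))
    (pow_nonneg hρ0 kk)
  calc ∑' j : ℕ+, ENNReal.ofReal (u j * rowSum Q kk j)
      = ∑' j : ℕ+, ∑' m : ℕ+, ENNReal.ofReal (u j) * ENNReal.ofReal (matpow Q kk j m) := by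
        refine tsum_congr fun j => ?_
        rw [ENNReal.ofReal_mul (hu0 j), ofReal_rowSum hQ0 hQs hQr, ENNReal.tsum_mul_left]
    _ = ∑' m : ℕ+, ∑' j : ℕ+, ENNReal.ofReal (u j) * ENNReal.ofReal (matpow Q kk j m) :=
        ENNReal.tsum_comm
    _ = ∑' m : ℕ+, ENNReal.ofReal (ρ ^ kk * u m) :=
        tsum_congr fun m => uM_enn hQ0 hQs hQr hρ0 hu0 hu_eig kk m
    _ = ENNReal.ofReal (ρ ^ kk) := by
        rw [← ENNReal.ofReal_tsum_of_nonneg (fun m => mul_nonneg (pow_nonneg hρ0 kk) (hu0 m))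
          (hu_sum.summable.mul_left _), tsum_mul_left, hu_sum.tsum_eq, mul_one]

end Eig


/-- Under the spectral hypothesis, for every fixed `k ≥ 1`,
`d_{n-k}^{(n)}(i) → (ρ^{-k}/2) ∑_j u_j |(S⁽ᵏ⁾𝟙)_j|` as `n → ∞`. -/
theorem tvDist_tendsto_of_lag
    (Q : ℕ+ → ℕ+ → ℝ)
    (hQ_nonneg : ∀ i j, 0 ≤ Q i j)
    (hQ_summ : ∀ i, Summable (fun j => Q i j))
    (hQ_row : ∀ i, ∑' j, Q i j ≤ 1)
    (ρ : ℝ) (hρ : ρ ∈ Set.Ioo (0 : ℝ) 1)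
    (u v : ℕ+ → ℝ) (hu_pos : ∀ j, 0 < u j) (hv_pos : ∀ j, 0 < v j)
    (hu_eig : ∀ j, HasSum (fun i : ℕ+ => u i * Q i j) (ρ * u j))
    (hv_eig : ∀ i, HasSum (fun j : ℕ+ => Q i j * v j) (ρ * v i))
    (hu_sum : HasSum u 1) (huv_sum : HasSum (fun j => u j * v j) 1)
    (ν : ℕ) (hν : 1 ≤ ν)
    (hu_mom : Summable (fun j : ℕ+ => (j : ℝ) ^ ν * u j))
    (hv_bdd : ∃ M : ℝ, ∀ j : ℕ+, v j / (j : ℝ) ^ ν ≤ M)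
    (K ε : ℝ) (hε : ε ∈ Set.Ioo (0 : ℝ) 1)
    (hS_entry : ∀ n, 1 ≤ n → ∀ i j : ℕ+,
      |matpow Q n i j - ρ ^ n * v i * u j| ≤ ((i : ℝ) ^ ν / (j : ℝ) ^ ν) * K * (1 - ε) ^ n * ρ ^ n)
    (hS_row : ∀ n, 1 ≤ n → ∀ i : ℕ+,
      |Sone Q ρ v u n i| ≤ (i : ℝ) ^ ν * K * (1 - ε) ^ n * ρ ^ n) :
    ∀ i : ℕ+, ∀ k : ℕ, 1 ≤ k →
      Tendsto (fun n : ℕ => tvDist Q ρ v i (n - k) n) atTop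
        (𝓝 ((ρ ^ k)⁻¹ / 2 * ∑' j : ℕ+, u j * |Sone Q ρ v u k j|)) := by
  intro i k hk
  obtain ⟨hρ0, hρ1⟩ := hρ
  obtain ⟨hε0, hε1⟩ := hε
  have hvi : 0 < v i := hv_pos i
  have hv0 : ∀ j, 0 ≤ v j := fun j => (hv_pos j).le
  have h1ε0 : (0:ℝ) ≤ 1 - ε := by linarith
  have h1ε1 : (1:ℝ) - ε < 1 := by linarith
  -- the two basic entrywise limits
  have ha : ∀ j : ℕ+, Tendsto (fun n : ℕ => matpow Q (n - k) i j * ((ρ ^ (n - k) : ℝ))⁻¹)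
      atTop (𝓝 (v i * u j)) := by
    intro j
    rw [tendsto_iff_dist_tendsto_zero]
    apply squeeze_zero' (Eventually.of_forall fun n => dist_nonneg)
      (g := fun n : ℕ => ((i:ℝ) ^ ν / (j:ℝ) ^ ν) * K * (1 - ε) ^ (n - k))
    · filter_upwards [eventually_ge_atTop (k + 1)] with n hn
      have hl1 : 1 ≤ n - k := by omega
      have hbd := hS_entry (n - k) hl1 i j
      have hρl : (0:ℝ) < ρ ^ (n - k) := pow_pos hρ0 _
      rw [Real.dist_eq]
      have heq : matpow Q (n - k) i j * (ρ ^ (n - k))⁻¹ - v i * u j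
          = (matpow Q (n - k) i j - ρ ^ (n - k) * v i * u j) * (ρ ^ (n - k))⁻¹ := by
        field_simp
      rw [heq, abs_mul, abs_of_pos (inv_pos.2 hρl)]
      calc |matpow Q (n - k) i j - ρ ^ (n - k) * v i * u j| * (ρ ^ (n - k))⁻¹
          ≤ ((i:ℝ) ^ ν / (j:ℝ) ^ ν) * K * (1 - ε) ^ (n - k) * ρ ^ (n - k) * (ρ ^ (n - k))⁻¹ :=
            mul_le_mul_of_nonneg_right hbd (inv_pos.2 hρl).le
        _ = ((i:ℝ) ^ ν / (j:ℝ) ^ ν) * K * (1 - ε) ^ (n - k) :=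
            mul_inv_cancel_right₀ hρl.ne' _
    · have h2 := (tendsto_pow_atTop_nhds_zero_of_lt_one h1ε0 h1ε1).comp
        (Filter.tendsto_sub_atTop_nat k)
      have h3 := h2.const_mul (((i:ℝ) ^ ν / (j:ℝ) ^ ν) * K)
      simpa [Function.comp, mul_comm] using h3
  have hb : Tendsto (fun n : ℕ => rowSum Q n i * ((ρ ^ n : ℝ))⁻¹) atTop (𝓝 (v i)) := by
    rw [tendsto_iff_dist_tendsto_zero]
    apply squeeze_zero' (Eventually.of_forall fun n => dist_nonneg)
      (g := fun n : ℕ => (i:ℝ) ^ ν * K * (1 - ε) ^ n)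
    · filter_upwards [eventually_ge_atTop 1] with n hn
      have hbd := hS_row n hn i
      rw [sone_eq hQ_nonneg hQ_summ hQ_row ρ u v hu_sum n i] at hbd
      have hρn : (0:ℝ) < ρ ^ n := pow_pos hρ0 _
      rw [Real.dist_eq]
      have heq : rowSum Q n i * (ρ ^ n)⁻¹ - v i
          = (rowSum Q n i - ρ ^ n * v i) * (ρ ^ n)⁻¹ := by field_simp
      rw [heq, abs_mul, abs_of_pos (inv_pos.2 hρn)]
      calc |rowSum Q n i - ρ ^ n * v i| * (ρ ^ n)⁻¹
          ≤ (i:ℝ) ^ ν * K * (1 - ε) ^ n * ρ ^ n * (ρ ^ n)⁻¹ :=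
            mul_le_mul_of_nonneg_right hbd (inv_pos.2 hρn).le
        _ = (i:ℝ) ^ ν * K * (1 - ε) ^ n := mul_inv_cancel_right₀ hρn.ne' _
    · have h3 := (tendsto_pow_atTop_nhds_zero_of_lt_one h1ε0 h1ε1).const_mul ((i:ℝ) ^ ν * K)
      simpa [mul_comm] using h3
  have hRpos : ∀ᶠ n in atTop, 0 < rowSum Q n i := by
    have htend : Tendsto (fun n : ℕ => (i:ℝ) ^ ν * K * (1 - ε) ^ n) atTop (𝓝 0) := by
      have h3 := (tendsto_pow_atTop_nhds_zero_of_lt_one h1ε0 h1ε1).const_mul ((i:ℝ) ^ ν * K)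
      simpa [mul_comm] using h3
    filter_upwards [htend.eventually_lt_const hvi, eventually_ge_atTop 1] with n h1 h2
    have hbd := hS_row n h2 i
    rw [sone_eq hQ_nonneg hQ_summ hQ_row ρ u v hu_sum n i] at hbd
    have hρn : (0:ℝ) < ρ ^ n := pow_pos hρ0 n
    rw [abs_le] at hbd
    nlinarith [hbd.1, mul_pos hρn (sub_pos.2 h1)]
  -- the dominated-convergence data
  have hchap : ∀ n : ℕ, Summable (fun j => matpow Q (n - k) i j * rowSum Q k j)
      ∧ ∑' j : ℕ+, matpow Q (n - k) i j * rowSum Q k j = rowSum Q ((n - k) + k) i :=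
    fun n => chapman hQ_nonneg hQ_summ hQ_row (n - k) k i
  have hmv : ∀ n : ℕ, Summable (fun j => matpow Q (n - k) i j * v j)
      ∧ ∑' j : ℕ+, matpow Q (n - k) i j * v j = ρ ^ (n - k) * v i :=
    fun n => mv_real hQ_nonneg hQ_summ hQ_row hρ0.le hv0 hv_eig (n - k) i
  have hur : Summable (fun j => u j * rowSum Q k j)
      ∧ ∑' j : ℕ+, u j * rowSum Q k j = ρ ^ k :=
    uRow_real hQ_nonneg hQ_summ hQ_row hρ0.le (fun j => (hu_pos j).le) hu_eig hu_sum k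
  set F : ℕ → ℕ+ → ℝ := fun n j =>
    |matpow Q (n - k) i j * rowSum Q k j / rowSum Q n i
      - (ρ ^ (n - k))⁻¹ * (v i)⁻¹ * (matpow Q (n - k) i j * v j)| with hF
  set G : ℕ → ℕ+ → ℝ := fun n j =>
    matpow Q (n - k) i j * rowSum Q k j / rowSum Q n i
      + (ρ ^ (n - k))⁻¹ * (v i)⁻¹ * (matpow Q (n - k) i j * v j) with hG
  set F' : ℕ+ → ℝ := fun j => (ρ ^ k)⁻¹ * (u j * |Sone Q ρ v u k j|) with hF'
  set G' : ℕ+ → ℝ := fun j => (ρ ^ k)⁻¹ * (u j * rowSum Q k j) + u j * v j with hG'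
  have hT1nn : ∀ n j, 0 ≤ matpow Q (n - k) i j * rowSum Q k j / rowSum Q n i := fun n j =>
    div_nonneg (mul_nonneg (matpow_nonneg hQ_nonneg _ i j)
      (rowSum_nonneg hQ_nonneg hQ_summ hQ_row k j))
      (rowSum_nonneg hQ_nonneg hQ_summ hQ_row n i)
  have hT2nn : ∀ n j, 0 ≤ (ρ ^ (n - k))⁻¹ * (v i)⁻¹ * (matpow Q (n - k) i j * v j) := fun n j =>
    mul_nonneg (mul_nonneg (inv_nonneg.2 (pow_nonneg hρ0.le _)) (inv_nonneg.2 hvi.le))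
      (mul_nonneg (matpow_nonneg hQ_nonneg _ i j) (hv0 j))
  have hF0 : ∀ n, ∀ j : ℕ+, 0 ≤ F n j := fun n j => abs_nonneg _
  have hFG : ∀ n, ∀ j : ℕ+, F n j ≤ G n j := by
    intro n j
    simp only [hF, hG]
    exact abs_le.2 ⟨by linarith [hT1nn n j, hT2nn n j], by linarith [hT1nn n j, hT2nn n j]⟩
  have hGsum : ∀ n, Summable (G n) := fun n =>
    ((hchap n).1.div_const (rowSum Q n i)).add
      ((hmv n).1.mul_left ((ρ ^ (n - k))⁻¹ * (v i)⁻¹))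
  have hFsum : ∀ n, Summable (F n) := fun n =>
    Summable.of_nonneg_of_le (hF0 n) (hFG n) (hGsum n)
  -- pointwise limits
  have hT1lim : ∀ j : ℕ+, Tendsto (fun n => matpow Q (n - k) i j * rowSum Q k j / rowSum Q n i)
      atTop (𝓝 ((ρ ^ k)⁻¹ * (u j * rowSum Q k j))) := by
    intro j
    have h1 := (((ha j).mul_const (rowSum Q k j)).mul
      ((hb.inv₀ hvi.ne'))).mul_const ((ρ ^ k : ℝ)⁻¹)
    have hval : v i * u j * rowSum Q k j * (v i)⁻¹ * (ρ ^ k)⁻¹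
        = (ρ ^ k)⁻¹ * (u j * rowSum Q k j) := by field_simp
    rw [hval] at h1
    refine Filter.Tendsto.congr' ?_ h1
    filter_upwards [hRpos, eventually_ge_atTop k] with n hR hkn
    have hρl : (ρ:ℝ) ^ (n - k) ≠ 0 := (pow_pos hρ0 _).ne'
    have hρk : (ρ:ℝ) ^ k ≠ 0 := (pow_pos hρ0 _).ne'
    have hsplit : (ρ:ℝ) ^ n = ρ ^ (n - k) * ρ ^ k := by
      rw [← pow_add]; congr 1; omega
    rw [hsplit]
    field_simp
  have hT2lim : ∀ j : ℕ+,
      Tendsto (fun n => (ρ ^ (n - k))⁻¹ * (v i)⁻¹ * (matpow Q (n - k) i j * v j))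
      atTop (𝓝 (u j * v j)) := by
    intro j
    have h1 := (ha j).mul_const ((v i)⁻¹ * v j)
    have hval : v i * u j * ((v i)⁻¹ * v j) = u j * v j := by field_simp
    rw [hval] at h1
    exact Filter.Tendsto.congr (fun n => by ring) h1
  have hFlim : ∀ j : ℕ+, Tendsto (fun n => F n j) atTop (𝓝 (F' j)) := by
    intro j
    have h1 := ((hT1lim j).sub (hT2lim j)).abs
    have hval : |(ρ ^ k)⁻¹ * (u j * rowSum Q k j) - u j * v j| = F' j := by
      simp only [hF']
      rw [sone_eq hQ_nonneg hQ_summ hQ_row ρ u v hu_sum k j]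
      have h3 : (ρ ^ k)⁻¹ * (u j * rowSum Q k j) - u j * v j
          = (ρ ^ k)⁻¹ * (u j * (rowSum Q k j - ρ ^ k * v j)) := by
        field_simp
      rw [h3, abs_mul, abs_mul, abs_of_pos (inv_pos.2 (pow_pos hρ0 k)),
        abs_of_pos (hu_pos j)]
    rw [hval] at h1
    exact h1
  have hGlim : ∀ j : ℕ+, Tendsto (fun n => G n j) atTop (𝓝 (G' j)) := fun j =>
    (hT1lim j).add (hT2lim j)
  have hG'sum : Summable G' := (hur.1.mul_left ((ρ ^ k)⁻¹)).add huv_sum.summable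
  have hG'val : ∑' j : ℕ+, G' j = 2 := by
    simp only [hG']
    rw [Summable.tsum_add (hur.1.mul_left ((ρ ^ k)⁻¹)) huv_sum.summable, tsum_mul_left, hur.2,
      huv_sum.tsum_eq, inv_mul_cancel₀ (pow_pos hρ0 k).ne']
    norm_num
  have hGnval : ∀ᶠ n in atTop, ∑' j : ℕ+, G n j = 2 := by
    filter_upwards [hRpos, eventually_ge_atTop k] with n hR hkn
    simp only [hG]
    rw [Summable.tsum_add ((hchap n).1.div_const (rowSum Q n i))
      ((hmv n).1.mul_left ((ρ ^ (n - k))⁻¹ * (v i)⁻¹))]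
    have e1 : ∑' j : ℕ+, matpow Q (n - k) i j * rowSum Q k j / rowSum Q n i = 1 := by
      rw [tsum_div_const, (hchap n).2, Nat.sub_add_cancel hkn, div_self hR.ne']
    have e2 : ∑' j : ℕ+, (ρ ^ (n - k))⁻¹ * (v i)⁻¹ * (matpow Q (n - k) i j * v j) = 1 := by
      rw [tsum_mul_left, (hmv n).2]
      field_simp
    rw [e1, e2]
    norm_num
  have hGt : Tendsto (fun n => ∑' j : ℕ+, G n j) atTop (𝓝 (∑' j : ℕ+, G' j)) := by
    rw [hG'val]
    exact Filter.Tendsto.congr' (hGnval.mono fun n h => h.symm) tendsto_const_nhds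
  have hmain := pratt (Eventually.of_forall hF0) (Eventually.of_forall hFG)
    (Eventually.of_forall hGsum) hFlim hGlim hG'sum hGt
  have hhalf := hmain.const_mul (1 / 2 : ℝ)
  have hgoalval : (ρ ^ k)⁻¹ / 2 * (∑' j : ℕ+, u j * |Sone Q ρ v u k j|)
      = (1 / 2 : ℝ) * ∑' j : ℕ+, F' j := by
    simp only [hF']
    rw [tsum_mul_left]
    ring
  rw [hgoalval]
  refine Filter.Tendsto.congr' ?_ hhalf
  filter_upwards [hRpos, eventually_ge_atTop k] with n hR hkn
  have hFD : ∀ j : ℕ+, F n j = matpow Q (n - k) i j *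
      |rowSum Q k j / rowSum Q n i - (ρ ^ (n - k))⁻¹ * (v i)⁻¹ * v j| := by
    intro j
    simp only [hF]
    have h3 : matpow Q (n - k) i j * rowSum Q k j / rowSum Q n i
        - (ρ ^ (n - k))⁻¹ * (v i)⁻¹ * (matpow Q (n - k) i j * v j)
        = matpow Q (n - k) i j *
          (rowSum Q k j / rowSum Q n i - (ρ ^ (n - k))⁻¹ * (v i)⁻¹ * v j) := by ring
    rw [h3, abs_mul, abs_of_nonneg (matpow_nonneg hQ_nonneg (n - k) i j)]
  have hDsum : Summable (fun j => matpow Q (n - k) i j *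
      |rowSum Q k j / rowSum Q n i - (ρ ^ (n - k))⁻¹ * (v i)⁻¹ * v j|) :=
    (hFsum n).congr hFD
  rw [tv_eq hQ_nonneg hQ_summ hQ_row ρ v i n k hkn hDsum]
  congr 1
  exact tsum_congr hFD
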